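/- With F as above, the symmetric part satisfies xᵀ F x = −x₂ᵀ R_c1 x₂ − (x₂+x₄)ᵀ R_c2 (x₂+x₄) for every x = (x₁,x₂,x₃,x₄) with x₁∈ℝⁿ, x₂∈ℝᵐ, x₃∈ℝˢ, x₄∈ℝᵐ. In particular, if R_c1 > 0 and R_c2 > 0, then xᵀFx = 0 implies x₂ = 0 and x₄ = 0. -/

import Mathlib

open Matrix

lemma stmt7_tdot {k l : ℕ} (A : Matrix (Fin k) (Fin l) ℝ) (x : Fin k → ℝ) (y : Fin l → ℝ) :
    y ⬝ᵥ Aᵀ.mulVec x = x ⬝ᵥ A.mulVec y := by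
  rw [Matrix.dotProduct_mulVec, Matrix.vecMul_transpose, dotProduct_comm]

lemma stmt7_skewdot {k : ℕ} (J : Matrix (Fin k) (Fin k) ℝ) (hJ : Jᵀ = -J) (x : Fin k → ℝ) :
    x ⬝ᵥ J.mulVec x = 0 := by
  have := stmt7_tdot J x x
  rw [hJ, Matrix.neg_mulVec, dotProduct_neg] at this
  linarith

lemma stmt7_pd_pos {k : ℕ} {A : Matrix (Fin k) (Fin k) ℝ} (hA : A.PosDef)
    {x : Fin k → ℝ} (hx : x ≠ 0) : 0 < x ⬝ᵥ A.mulVec x := by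
  simpa using hA.dotProduct_mulVec_pos hx

lemma stmt7_pd_nonneg {k : ℕ} {A : Matrix (Fin k) (Fin k) ℝ} (hA : A.PosDef)
    (x : Fin k → ℝ) : 0 ≤ x ⬝ᵥ A.mulVec x := by
  simpa using hA.posSemidef.dotProduct_mulVec_nonneg x

/-- With `F` the closed-loop structure matrix, for every
`x = (x₁,x₂,x₃,x₄)` one has
`xᵀ F x = −x₂ᵀ R_c1 x₂ − (x₂+x₄)ᵀ R_c2 (x₂+x₄)`; in particular, if
`R_c1 > 0` and `R_c2 > 0`, then `xᵀ F x = 0` implies `x₂ = 0` and `x₄ = 0`. -/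
theorem stmt7 (n m s : ℕ)
    (S1 : Matrix (Fin n) (Fin m) ℝ) (S2 : Matrix (Fin n) (Fin s) ℝ)
    (S32 : Matrix (Fin m) (Fin s) ℝ) (S34 : Matrix (Fin s) (Fin s) ℝ)
    (Jc1 Rc1 Rc2 : Matrix (Fin m) (Fin m) ℝ)
    (hJc1 : Jc1.transpose = -Jc1) (hS34 : S34.transpose = -S34)
    (hRc1 : Rc1.transpose = Rc1) (hRc2 : Rc2.transpose = Rc2) :
    let F : Matrix ((Fin n ⊕ Fin m) ⊕ (Fin s ⊕ Fin m))
        ((Fin n ⊕ Fin m) ⊕ (Fin s ⊕ Fin m)) ℝ :=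
      Matrix.fromBlocks
        (Matrix.fromBlocks 0 S1 (-S1.transpose) (Jc1 - Rc1 - Rc2))
        (Matrix.fromBlocks S2 S1 S32 (-Rc2))
        (Matrix.fromBlocks (-S2.transpose) (-S32.transpose)
          (-S1.transpose) (-Rc2))
        (Matrix.fromBlocks S34 (-S32.transpose) S32 (-Rc2))
    (∀ (x1 : Fin n → ℝ) (x2 : Fin m → ℝ) (x3 : Fin s → ℝ) (x4 : Fin m → ℝ),
        (Sum.elim (Sum.elim x1 x2) (Sum.elim x3 x4)) ⬝ᵥ
            F.mulVec (Sum.elim (Sum.elim x1 x2) (Sum.elim x3 x4)) =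
          -(x2 ⬝ᵥ Rc1.mulVec x2) - ((x2 + x4) ⬝ᵥ Rc2.mulVec (x2 + x4))) ∧
      (Rc1.PosDef → Rc2.PosDef →
        ∀ (x1 : Fin n → ℝ) (x2 : Fin m → ℝ) (x3 : Fin s → ℝ) (x4 : Fin m → ℝ),
          (Sum.elim (Sum.elim x1 x2) (Sum.elim x3 x4)) ⬝ᵥ
              F.mulVec (Sum.elim (Sum.elim x1 x2) (Sum.elim x3 x4)) = 0 →
            x2 = 0 ∧ x4 = 0) := by
  intro F
  have key : ∀ (x1 : Fin n → ℝ) (x2 : Fin m → ℝ) (x3 : Fin s → ℝ) (x4 : Fin m → ℝ),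
      (Sum.elim (Sum.elim x1 x2) (Sum.elim x3 x4)) ⬝ᵥ
          F.mulVec (Sum.elim (Sum.elim x1 x2) (Sum.elim x3 x4)) =
        -(x2 ⬝ᵥ Rc1.mulVec x2) - ((x2 + x4) ⬝ᵥ Rc2.mulVec (x2 + x4)) := by
    intro x1 x2 x3 x4
    show _ ⬝ᵥ (Matrix.fromBlocks _ _ _ _).mulVec _ = _
    simp only [Matrix.fromBlocks_mulVec, sumElim_dotProduct_sumElim,
      Matrix.add_mulVec, Matrix.sub_mulVec, Matrix.neg_mulVec, Matrix.zero_mulVec,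
      Matrix.mulVec_add, dotProduct_add, add_dotProduct,
      dotProduct_neg, dotProduct_sub, zero_add, dotProduct_zero,
      Sum.elim_comp_inl, Sum.elim_comp_inr]
    rw [stmt7_skewdot Jc1 hJc1, stmt7_skewdot S34 hS34]
    have h1 := stmt7_tdot S1 x1 x2
    have h2 := stmt7_tdot S1 x1 x4
    have h3 := stmt7_tdot S2 x1 x3
    have h4 := stmt7_tdot S32 x2 x3
    have h5 := stmt7_tdot S32 x4 x3
    linarith
  refine ⟨key, ?_⟩
  intro hp1 hp2 x1 x2 x3 x4 hx
  rw [key] at hx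
  have q1 := stmt7_pd_nonneg hp1 x2
  have q2 := stmt7_pd_nonneg hp2 (x2 + x4)
  have h2 : x2 = 0 := by
    by_contra h
    exact absurd hx (by have := stmt7_pd_pos hp1 h; linarith)
  have h4 : x2 + x4 = 0 := by
    by_contra h
    exact absurd hx (by have := stmt7_pd_pos hp2 h; linarith)
  refine ⟨h2, ?_⟩
  rw [h2] at h4
  simpa using h4
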